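/- Every execution on the trading graph constructed by the 3D-matching reduction can be transformed into an execution with the same total number of exchanges in which every cycle containing an E₀ edge contains exactly one E₀ edge. -/

import Mathlib

structure TState (N M : Type) where
  own : N → Finset M
  dem : N → Finset M

variable {N M : Type} [DecidableEq N] [DecidableEq M]

/-- In a trading cycle `c = [(i₁,j₁),…,(i_k,j_k)]`, agent `i_t` receives item `j_t`;
`gives c` pairs each agent with the item he gives, namely `j_{t-1}` (cyclically). -/
def gives (c : List (N × M)) : List (N × M) :=
  (c.map Prod.fst).zip ((c.rotate (c.length - 1)).map Prod.snd)

/-- A valid cycle step: nonempty, visits each agent and each item at most once,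
every participating agent receives an item he currently demands and gives an item
he currently owns. -/
def ValidCycle (s : TState N M) (c : List (N × M)) : Prop :=
  c ≠ [] ∧ (c.map Prod.fst).Nodup ∧ (c.map Prod.snd).Nodup ∧
    (∀ p ∈ c, p.2 ∈ s.dem p.1) ∧ (∀ p ∈ gives c, p.2 ∈ s.own p.1)

/-- The state after executing a cycle: every used demand edge is reversed into a
supply edge (the received item moves into the agent's supply and leaves his demand),
and every used supply edge is removed. -/
def stepCycle (s : TState N M) (c : List (N × M)) : TState N M where
  own i := ((s.own i).filter fun j => (i, j) ∉ gives c) ∪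
      ((c.filter fun p => decide (p.1 = i)).map Prod.snd).toFinset
  dem i := (s.dem i).filter fun j => (i, j) ∉ c

/-- An execution is a sequence of cycle steps, each valid in the successively
updated state. -/
def ValidExec (s : TState N M) : List (List (N × M)) → Prop
  | [] => True
  | c :: r => ValidCycle s c ∧ ValidExec (stepCycle s c) r

/-- Total number of exchanges (items received) in an execution. -/
def exchanges (r : List (List (N × M))) : ℕ := (r.map List.length).sum

/-- Number of items agent `i` receives during execution `r`. -/
def receivedCount (r : List (List (N × M))) (i : N) : ℕ :=
  (r.map fun c => c.countP fun p => decide (p.1 = i)).sum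

/-- Number of items agent `i` gives during execution `r`. -/
def givenCount (r : List (List (N × M))) (i : N) : ℕ :=
  (r.map fun c => (gives c).countP fun p => decide (p.1 = i)).sum

/-- A static execution allocates each item at most once. -/
def StaticExec (r : List (List (N × M))) : Prop := (r.flatten.map Prod.snd).Nodup

/-- Agents of the reduction from 3D-matching: `ga t 0, ga t 1, ga t 2` are the
gadget agents `(xyz)₂, (xyz)₄, (xyz)₆` for the triple `t = (x,y,z)`; `ya y = y₂`,
`za z = z₁`, `xa1 x = x₁`, `xa3 x = x₃`. -/
inductive RAg (n : ℕ) where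
  | ga : (Fin n × Fin n × Fin n) → Fin 3 → RAg n
  | ya : Fin n → RAg n
  | za : Fin n → RAg n
  | xa1 : Fin n → RAg n
  | xa3 : Fin n → RAg n
deriving DecidableEq

/-- Items of the reduction: `gi t 0, gi t 1, gi t 2, gi t 3` are the gadget items
`(xyz)₁, (xyz)₃, (xyz)₅, (xyz)₇`; `yi y = y₁`, `zi z = z₂`, `xi x = x₂`. -/
inductive RIt (n : ℕ) where
  | gi : (Fin n × Fin n × Fin n) → Fin 4 → RIt n
  | yi : Fin n → RIt n
  | zi : Fin n → RIt n
  | xi : Fin n → RIt n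
deriving DecidableEq

/-- Supply sets of the reduction instance built from the triple set `T`. -/
def RS (n : ℕ) (T : Finset (Fin n × Fin n × Fin n)) : RAg n → Finset (RIt n)
  | .ga t i => if t ∈ T then {.gi t i.castSucc} else ∅
  | .ya y => {.yi y}
  | .za z => (T.filter fun t => t.2.2 = z).image fun t => .gi t 3
  | .xa1 _ => Finset.univ.image RIt.zi
  | .xa3 x => {.xi x}

/-- Demand sets of the reduction instance built from the triple set `T`. -/
def RD (n : ℕ) (T : Finset (Fin n × Fin n × Fin n)) : RAg n → Finset (RIt n)
  | .ga t i =>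
      if t ∈ T then
        (if i = 0 then {.gi t 1, .gi t 3}
         else if i = 1 then {.yi t.2.1}
         else {.gi t 3})
      else ∅
  | .ya y => (T.filter fun t => t.2.1 = y).image fun t => .gi t 2
  | .za z => {.zi z}
  | .xa1 x => {.xi x}
  | .xa3 x => (T.filter fun t => t.1 = x).image fun t => .gi t 0

/-- Whether a demand edge (agent receives item) belongs to the class
`E₀ = {(x₁, x₂)}`. -/
def isE0 {n : ℕ} : RAg n × RIt n → Bool
  | (.xa1 x, .xi x') => x == x'
  | _ => false

/-- Whether a demand edge belongs to the class `E₆ = {((xyz)₂, (xyz)₇)}`. -/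
def isE6 {n : ℕ} : RAg n × RIt n → Bool
  | (.ga t i, .gi t' j) => t == t' && i == 0 && j == 3
  | _ => false

/-- The number of large `X`-cycles in an execution: cycle steps using an `E₀` edge
but no `E₆` edge. -/
def numLarge {n : ℕ} (r : List (List (RAg n × RIt n))) : ℕ :=
  r.countP fun c => (c.countP isE0 != 0) && (c.countP isE6 == 0)

/-- The number of `Y`-cycles in an execution: cycle steps using no `E₀` edge. -/
def numY {n : ℕ} (r : List (List (RAg n × RIt n))) : ℕ :=
  r.countP fun c => c.countP isE0 == 0

/-- A set of triples is a partial 3D-matching: pairwise disjoint in each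
coordinate. -/
def IsPartialMatching {n : ℕ} (S : Finset (Fin n × Fin n × Fin n)) : Prop :=
  ∀ t ∈ S, ∀ t' ∈ S, t ≠ t' →
    t.1 ≠ t'.1 ∧ t.2.1 ≠ t'.2.1 ∧ t.2.2 ≠ t'.2.2

namespace S19
open List
set_option linter.unusedSectionVars false

variable {N M : Type} [DecidableEq N] [DecidableEq M]

lemma rotate_len_sub_one (c : List (N × M)) (h : c ≠ []) :
    c.rotate (c.length - 1) = c.getLast h :: c.dropLast := by
  rcases List.eq_nil_or_concat c with rfl | ⟨l, a, rfl⟩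
  · simp at h
  · simp only [List.concat_eq_append]
    rw [List.rotate_eq_drop_append_take (Nat.sub_le _ _)]
    simp

lemma gives_eq (c : List (N × M)) (h : c ≠ []) :
    gives c = ((c.head h).1, (c.getLast h).2) ::
      (c.tail.map Prod.fst).zip (c.dropLast.map Prod.snd) := by
  rcases c with _ | ⟨p, t⟩
  · simp at h
  · unfold gives
    rw [rotate_len_sub_one _ h]
    simp

lemma map_fst_gives (c : List (N × M)) : (gives c).map Prod.fst = c.map Prod.fst := by
  unfold gives
  rw [List.map_fst_zip]
  simp [List.length_rotate]

lemma map_snd_gives (c : List (N × M)) :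
    (gives c).map Prod.snd = (c.map Prod.snd).rotate (c.length - 1) := by
  unfold gives
  rw [List.map_snd_zip, List.map_rotate]
  simp [List.length_rotate]

lemma snd_mem_of_mem_gives {c : List (N × M)} {p : N × M} (h : p ∈ gives c) :
    p.2 ∈ c.map Prod.snd := by
  have : p.2 ∈ (gives c).map Prod.snd := List.mem_map_of_mem h
  rw [map_snd_gives] at this
  rwa [List.mem_rotate] at this

lemma length_gives (c : List (N × M)) : (gives c).length = c.length := by
  unfold gives; simp [List.length_rotate]


lemma gives_append (c1 c2 : List (N × M)) (h1 : c1 ≠ []) (h2 : c2 ≠ []) :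
    gives (c1 ++ c2) =
      (((c1.head h1).1, (c2.getLast h2).2) :: (gives c1).tail) ++
      (((c2.head h2).1, (c1.getLast h1).2) :: (gives c2).tail) := by
  have hne : c1 ++ c2 ≠ [] := by simp [h1]
  rw [gives_eq _ hne, gives_eq _ h1, gives_eq _ h2]
  have e1 : (c1++c2).head hne = c1.head h1 := by rw [List.head_append]; simp [h1]
  have e2 : (c1++c2).getLast hne = c2.getLast h2 := by rw [List.getLast_append]; simp [h2]
  have e3 : (c1++c2).tail = c1.tail ++ c2 := by rw [List.tail_append]; simp [h1]
  have e4 : (c1++c2).dropLast = c1 ++ c2.dropLast := by rw [List.dropLast_append]; simp [h2]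
  rw [e1, e2, e3, e4, List.map_append, List.map_append]
  have e5 : c1.map Prod.snd = c1.dropLast.map Prod.snd ++ [(c1.getLast h1).2] := by
    conv_lhs => rw [← List.dropLast_append_getLast h1]
    simp
  rw [e5, List.append_assoc,
    List.zip_append (by simp [List.length_tail, List.length_dropLast])]
  have e6 : ∀ (a : M) (l : List M), (c2.map Prod.fst).zip (a :: l) =
      ((c2.head h2).1, a) :: (c2.tail.map Prod.fst).zip l := by
    rcases c2 with _ | ⟨p, t⟩
    · simp at h2
    · intro a l; simp
  rw [List.singleton_append, e6]
  simp

lemma mem_dem_step {s : TState N M} {c : List (N × M)} {i : N} {j : M} :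
    j ∈ (stepCycle s c).dem i ↔ j ∈ s.dem i ∧ (i, j) ∉ c := by
  simp [stepCycle]

lemma mem_own_step {s : TState N M} {c : List (N × M)} {i : N} {j : M} :
    j ∈ (stepCycle s c).own i ↔ (j ∈ s.own i ∧ (i, j) ∉ gives c) ∨ (i, j) ∈ c := by
  simp only [stepCycle, Finset.mem_union, Finset.mem_filter, List.mem_toFinset,
    List.mem_map, List.mem_filter]
  constructor
  · rintro (⟨h1, h2⟩ | ⟨p, ⟨hp, hpe⟩, hp2⟩)
    · exact Or.inl ⟨h1, h2⟩
    · right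
      have : p = (i, j) := by
        ext
        · exact of_decide_eq_true hpe
        · exact hp2
      exact this ▸ hp
  · rintro (⟨h1, h2⟩ | h)
    · exact Or.inl ⟨h1, h2⟩
    · exact Or.inr ⟨(i, j), ⟨h, by simp⟩, rfl⟩

/-- States equivalent for the remainder of an execution: equal demands, and equal
ownership of any item still demanded by someone. -/
def Rel (s s' : TState N M) : Prop :=
  (∀ i, s.dem i = s'.dem i) ∧ ∀ i j, (∃ a, j ∈ s.dem a) → (j ∈ s.own i ↔ j ∈ s'.own i)

lemma Rel.symm {s s' : TState N M} (h : Rel s s') : Rel s' s :=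
  ⟨fun i => (h.1 i).symm, fun i j ⟨a, ha⟩ => ((h.2 i j ⟨a, (h.1 a) ▸ ha⟩)).symm⟩

lemma Rel.validCycle {s s' : TState N M} {c : List (N × M)} (h : Rel s s')
    (hc : ValidCycle s c) : ValidCycle s' c := by
  obtain ⟨hne, hf, hs, hd, hg⟩ := hc
  refine ⟨hne, hf, hs, fun p hp => (h.1 p.1) ▸ hd p hp, fun p hp => ?_⟩
  obtain ⟨q, hq, hq2⟩ := List.mem_map.1 (snd_mem_of_mem_gives hp)
  exact (h.2 p.1 p.2 ⟨q.1, hq2 ▸ hd q hq⟩).1 (hg p hp)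

lemma Rel.step {s s' : TState N M} {c : List (N × M)} (h : Rel s s') :
    Rel (stepCycle s c) (stepCycle s' c) := by
  constructor
  · intro i; ext j; rw [mem_dem_step, mem_dem_step, h.1 i]
  · rintro i j ⟨a, ha⟩
    obtain ⟨ha1, -⟩ := mem_dem_step.1 ha
    rw [mem_own_step, mem_own_step, h.2 i j ⟨a, ha1⟩]

lemma Rel.validExec {s s' : TState N M} {r : List (List (N × M))} (h : Rel s s')
    (he : ValidExec s r) : ValidExec s' r := by
  induction r generalizing s s' with
  | nil => trivial
  | cons c r ih => exact ⟨h.validCycle he.1, ih h.step he.2⟩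

lemma gives_rotate (c : List (N × M)) (k : ℕ) :
    gives (c.rotate k) = (gives c).rotate k := by
  unfold gives
  rw [List.length_rotate, List.rotate_rotate, Nat.add_comm, ← List.rotate_rotate,
    List.map_rotate, List.map_rotate]
  exact (List.zipWith_rotate_distrib Prod.mk _ _ k (by simp [List.length_rotate])).symm

lemma validCycle_rotate {s : TState N M} {c : List (N × M)} (hc : ValidCycle s c) (k : ℕ) :
    ValidCycle s (c.rotate k) := by
  obtain ⟨hne, hf, hs, hd, hg⟩ := hc
  refine ⟨by simpa using hne, ?_, ?_, ?_, ?_⟩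
  · rw [List.map_rotate, List.nodup_rotate]; exact hf
  · rw [List.map_rotate, List.nodup_rotate]; exact hs
  · intro p hp; exact hd p (List.mem_rotate.1 hp)
  · intro p hp; rw [gives_rotate, List.mem_rotate] at hp; exact hg p hp

lemma stepCycle_rotate (s : TState N M) (c : List (N × M)) (k : ℕ) :
    stepCycle s (c.rotate k) = stepCycle s c := by
  show TState.mk _ _ = TState.mk _ _
  rw [TState.mk.injEq]
  constructor
  · funext i
    ext j
    simp only [Finset.mem_union, Finset.mem_filter, List.mem_toFinset, gives_rotate,
      List.mem_rotate]
    rw [(((List.rotate_perm c k).filter _).map Prod.snd).mem_iff]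
  · funext i
    ext j
    simp [List.mem_rotate]

/-- The execution invariant: supplies stay within initial supply plus initial
demand, demands only shrink, and any still-demanded item `z₂` is still owned by
every agent `x₁`. -/
def Inv (n : ℕ) (T : Finset (Fin n × Fin n × Fin n)) (s : TState (RAg n) (RIt n)) : Prop :=
  (∀ i, s.own i ⊆ RS n T i ∪ RD n T i) ∧ (∀ i, s.dem i ⊆ RD n T i) ∧
  (∀ x z : Fin n, (∃ i, RIt.zi z ∈ s.dem i) → RIt.zi z ∈ s.own (RAg.xa1 x))

lemma zi_dem {n : ℕ} {T : Finset (Fin n × Fin n × Fin n)} {i : RAg n} {z : Fin n}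
    (h : RIt.zi z ∈ RD n T i) : i = RAg.za z := by
  cases i <;> simp_all [RD]
  split_ifs at h <;> simp_all

lemma xa1_dem {n : ℕ} {T : Finset (Fin n × Fin n × Fin n)} {x : Fin n} {j : RIt n}
    (h : j ∈ RD n T (RAg.xa1 x)) : j = RIt.xi x := by
  simp_all [RD]

lemma xa1_own {n : ℕ} {T : Finset (Fin n × Fin n × Fin n)} {x : Fin n} {j : RIt n}
    (h : j ∈ RS n T (RAg.xa1 x) ∪ RD n T (RAg.xa1 x)) :
    (∃ z, j = RIt.zi z) ∨ j = RIt.xi x := by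
  simp [RS, RD] at h
  rcases h.symm with ⟨z, hz⟩ | h
  · exact Or.inl ⟨z, hz.symm⟩
  · exact Or.inr h

lemma inv_init (n : ℕ) (T : Finset (Fin n × Fin n × Fin n)) :
    Inv n T ⟨RS n T, RD n T⟩ := by
  refine ⟨fun i => Finset.subset_union_left, fun i => le_refl _, fun x z _ => ?_⟩
  simp [RS]

lemma inv_step {n : ℕ} {T : Finset (Fin n × Fin n × Fin n)} {s : TState (RAg n) (RIt n)}
    {c : List (RAg n × RIt n)} (hInv : Inv n T s) (hc : ValidCycle s c) :
    Inv n T (stepCycle s c) := by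
  obtain ⟨h1, h2, h3⟩ := hInv
  refine ⟨?_, ?_, ?_⟩
  · intro i j hj
    rcases mem_own_step.1 hj with ⟨hj, -⟩ | hj
    · exact h1 i hj
    · exact Finset.mem_union_right _ (h2 i (hc.2.2.2.1 _ hj))
  · intro i j hj
    exact h2 i (mem_dem_step.1 hj).1
  · rintro x z ⟨i, hi⟩
    obtain ⟨hiz, hic⟩ := mem_dem_step.1 hi
    have hiza : i = RAg.za z := zi_dem (h2 i hiz)
    refine mem_own_step.2 (Or.inl ⟨h3 x z ⟨i, hiz⟩, fun hg => ?_⟩)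
    obtain ⟨q, hq, hq2⟩ := List.mem_map.1 (snd_mem_of_mem_gives hg)
    have hq2' : q.2 = RIt.zi z := hq2
    have : q.1 = RAg.za z := zi_dem (h2 q.1 (hq2' ▸ hc.2.2.2.1 q hq))
    have hqe : q = (i, RIt.zi z) := by
      ext
      · rw [this, hiza]
      · rw [hq2']
    exact hic (hqe ▸ hq)

lemma prop_key (P A B C1 C2 : Prop) (h : C1 → ¬B) :
    (((P ∧ ¬A) ∨ C1) ∧ ¬B) ∨ C2 ↔ (P ∧ ¬(A ∨ B)) ∨ (C1 ∨ C2) := by tauto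

lemma split {n : ℕ} {T : Finset (Fin n × Fin n × Fin n)} {s : TState (RAg n) (RIt n)}
    {x x' : Fin n} {t1 t2 : List (RAg n × RIt n)} (hInv : Inv n T s)
    (hc : ValidCycle s (((RAg.xa1 x, RIt.xi x) :: t1) ++ ((RAg.xa1 x', RIt.xi x') :: t2))) :
    ValidCycle s ((RAg.xa1 x, RIt.xi x) :: t1) ∧
    ValidCycle (stepCycle s ((RAg.xa1 x, RIt.xi x) :: t1)) ((RAg.xa1 x', RIt.xi x') :: t2) ∧
    Rel (stepCycle (stepCycle s ((RAg.xa1 x, RIt.xi x) :: t1)) ((RAg.xa1 x', RIt.xi x') :: t2))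
        (stepCycle s (((RAg.xa1 x, RIt.xi x) :: t1) ++ ((RAg.xa1 x', RIt.xi x') :: t2))) := by
  set c1 : List (RAg n × RIt n) := (RAg.xa1 x, RIt.xi x) :: t1 with hc1def
  set c2 : List (RAg n × RIt n) := (RAg.xa1 x', RIt.xi x') :: t2 with hc2def
  have h1 : c1 ≠ [] := List.cons_ne_nil _ _
  have h2 : c2 ≠ [] := List.cons_ne_nil _ _
  obtain ⟨hne, hf, hsn, hd, hg⟩ := hc
  have hsn' : (c1.map Prod.snd ++ c2.map Prod.snd).Nodup := by rwa [← List.map_append]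
  have hdisj : ∀ j : RIt n, j ∈ c1.map Prod.snd → j ∈ c2.map Prod.snd → False :=
    fun j hj1 hj2 => (List.disjoint_of_nodup_append hsn') hj1 hj2
  set L1 := (c1.getLast h1).2 with hL1
  set L2 := (c2.getLast h2).2 with hL2
  have ga : gives (c1 ++ c2) =
      ((RAg.xa1 x, L2) :: (gives c1).tail) ++ ((RAg.xa1 x', L1) :: (gives c2).tail) :=
    gives_append c1 c2 h1 h2
  have gc1 : gives c1 = (RAg.xa1 x, L1) :: (gives c1).tail := by
    rw [gives_eq c1 h1]; rfl
  have gc2 : gives c2 = (RAg.xa1 x', L2) :: (gives c2).tail := by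
    rw [gives_eq c2 h2]; rfl
  have hL1mem : L1 ∈ c1.map Prod.snd := List.mem_map.2 ⟨_, List.getLast_mem h1, rfl⟩
  have hL2mem : L2 ∈ c2.map Prod.snd := List.mem_map.2 ⟨_, List.getLast_mem h2, rfl⟩
  have hxi1mem : (RIt.xi x : RIt n) ∈ c1.map Prod.snd :=
    List.mem_map.2 ⟨_, List.mem_cons_self, rfl⟩
  have hxi2mem : (RIt.xi x' : RIt n) ∈ c2.map Prod.snd :=
    List.mem_map.2 ⟨_, List.mem_cons_self, rfl⟩
  have hL1own : L1 ∈ s.own (RAg.xa1 x') := by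
    refine hg (RAg.xa1 x', L1) ?_
    rw [ga]; exact List.mem_append_right _ (List.mem_cons_self)
  have hL2own : L2 ∈ s.own (RAg.xa1 x) := by
    refine hg (RAg.xa1 x, L2) ?_
    rw [ga]; exact List.mem_append_left _ (List.mem_cons_self)
  obtain ⟨z1, hz1⟩ : ∃ z, L1 = RIt.zi z := by
    rcases xa1_own (hInv.1 _ hL1own) with h | h
    · exact h
    · exact absurd (h ▸ hL1mem) (fun hx => hdisj _ hx hxi2mem)
  obtain ⟨z2, hz2⟩ : ∃ z, L2 = RIt.zi z := by
    rcases xa1_own (hInv.1 _ hL2own) with h | h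
    · exact h
    · exact absurd (h ▸ hL2mem) (fun hx => hdisj _ hxi1mem hx)
  have hdemL1 : L1 ∈ s.dem (c1.getLast h1).1 :=
    hd _ (List.mem_append_left _ (List.getLast_mem h1))
  have hdemL2 : L2 ∈ s.dem (c2.getLast h2).1 :=
    hd _ (List.mem_append_right _ (List.getLast_mem h2))
  have Z1sub : ∀ p, p ∈ (gives c1).tail → p ∈ gives (c1 ++ c2) := fun p hp => by
    rw [ga]; exact List.mem_append_left _ (List.mem_cons_of_mem _ hp)
  have Z2sub : ∀ p, p ∈ (gives c2).tail → p ∈ gives (c1 ++ c2) := fun p hp => by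
    rw [ga]; exact List.mem_append_right _ (List.mem_cons_of_mem _ hp)
  have vc1 : ValidCycle s c1 := by
    refine ⟨h1, ?_, ?_, fun p hp => hd p (List.mem_append_left _ hp), ?_⟩
    · rw [List.map_append] at hf; exact hf.of_append_left
    · rw [List.map_append] at hsn; exact hsn.of_append_left
    · intro p hp
      rw [gc1] at hp
      rcases List.mem_cons.1 hp with rfl | hp
    -- need goal handling here
      · show L1 ∈ s.own (RAg.xa1 x)
        rw [hz1]
        exact hInv.2.2 x z1 ⟨_, hz1 ▸ hdemL1⟩
      · exact hg p (Z1sub p hp)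
  have hInv1 : Inv n T (stepCycle s c1) := inv_step hInv vc1
  have vc2 : ValidCycle (stepCycle s c1) c2 := by
    refine ⟨h2, ?_, ?_, ?_, ?_⟩
    · rw [List.map_append] at hf; exact hf.of_append_right
    · rw [List.map_append] at hsn; exact hsn.of_append_right
    · intro p hp
      refine mem_dem_step.2 ⟨hd p (List.mem_append_right _ hp), fun hin => ?_⟩
      exact hdisj p.2 (List.mem_map.2 ⟨p, hin, rfl⟩) (List.mem_map.2 ⟨p, hp, rfl⟩)
    · intro p hp
      rw [gc2] at hp
      rcases List.mem_cons.1 hp with rfl | hp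
      · show L2 ∈ (stepCycle s c1).own (RAg.xa1 x')
        rw [hz2]
        refine hInv1.2.2 x' z2 ⟨(c2.getLast h2).1, mem_dem_step.2 ⟨hz2 ▸ hdemL2, fun hin => ?_⟩⟩
        exact hdisj (RIt.zi z2) (List.mem_map.2 ⟨_, hin, rfl⟩) (hz2 ▸ hL2mem)
      · refine mem_own_step.2 (Or.inl ⟨hg p (Z2sub p hp), fun hpg1 => ?_⟩)
        refine hdisj p.2 (snd_mem_of_mem_gives hpg1) (snd_mem_of_mem_gives ?_)
        rw [gc2]; exact List.mem_cons_of_mem _ hp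
  refine ⟨vc1, vc2, ?_, ?_⟩
  · intro i
    ext j
    rw [mem_dem_step, mem_dem_step, mem_dem_step]
    simp only [List.mem_append]
    tauto
  · rintro i j ⟨a, ha⟩
    rw [mem_dem_step, mem_dem_step] at ha
    obtain ⟨⟨hja, hac1⟩, hac2⟩ := ha
    have hjz1 : j ≠ L1 := by
      rintro rfl
      have e1 : a = RAg.za z1 := zi_dem (hz1 ▸ hInv.2.1 a hja)
      have e2 : (c1.getLast h1).1 = RAg.za z1 := zi_dem (hz1 ▸ hInv.2.1 _ hdemL1)
      have : c1.getLast h1 = (a, L1) := by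
        have := e2.trans e1.symm
        ext
        · exact this
        · rfl
      exact hac1 (this ▸ List.getLast_mem h1)
    have hjz2 : j ≠ L2 := by
      rintro rfl
      have e1 : a = RAg.za z2 := zi_dem (hz2 ▸ hInv.2.1 a hja)
      have e2 : (c2.getLast h2).1 = RAg.za z2 := zi_dem (hz2 ▸ hInv.2.1 _ hdemL2)
      have : c2.getLast h2 = (a, L2) := by
        have := e2.trans e1.symm
        ext
        · exact this
        · rfl
      exact hac2 (this ▸ List.getLast_mem h2)
    have g1iff : ((i, j) ∈ gives c1) ↔ (i, j) ∈ (gives c1).tail := by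
      conv_lhs => rw [gc1]
      rw [List.mem_cons]
      constructor
      · rintro (he | h)
        · exact absurd (congrArg Prod.snd he) hjz1
        · exact h
      · exact Or.inr
    have g2iff : ((i, j) ∈ gives c2) ↔ (i, j) ∈ (gives c2).tail := by
      conv_lhs => rw [gc2]
      rw [List.mem_cons]
      constructor
      · rintro (he | h)
        · exact absurd (congrArg Prod.snd he) hjz2
        · exact h
      · exact Or.inr
    have gciff : ((i, j) ∈ gives (c1 ++ c2)) ↔
        ((i, j) ∈ (gives c1).tail ∨ (i, j) ∈ (gives c2).tail) := by
      rw [ga]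
      simp only [List.mem_append, List.mem_cons]
      constructor
      · rintro ((he | h) | (he | h))
        · exact absurd (congrArg Prod.snd he) hjz2
        · exact Or.inl h
        · exact absurd (congrArg Prod.snd he) hjz1
        · exact Or.inr h
      · rintro (h | h)
        · exact Or.inl (Or.inr h)
        · exact Or.inr (Or.inr h)
    have c1ng2 : (i, j) ∈ c1 → ¬ (i, j) ∈ (gives c2).tail := by
      intro h h2m
      refine hdisj j (List.mem_map.2 ⟨_, h, rfl⟩) (snd_mem_of_mem_gives (p := (i,j)) ?_)
      rw [gc2]; exact List.mem_cons_of_mem _ h2m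
    rw [mem_own_step, mem_own_step, mem_own_step, g1iff, g2iff, gciff, List.mem_append]
    exact prop_key _ _ _ _ _ c1ng2

lemma exists_first {α : Type*} (p : α → Bool) (l : List α) (h : l.countP p ≠ 0) :
    ∃ w q v, l = w ++ q :: v ∧ p q = true ∧ w.countP p = 0 := by
  induction l with
  | nil => simp at h
  | cons a t ih =>
    by_cases hpa : p a = true
    · exact ⟨[], a, t, rfl, hpa, rfl⟩
    · have ht : t.countP p ≠ 0 := by
        rw [List.countP_cons, if_neg hpa] at h; simpa using h
      obtain ⟨w, q, v, rfl, hq, hw⟩ := ih ht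
      exact ⟨a :: w, q, v, rfl, hq, by simp [List.countP_cons, hpa, hw]⟩

lemma isE0_spec {n : ℕ} {p : RAg n × RIt n} (h : isE0 p = true) :
    ∃ x, p = (RAg.xa1 x, RIt.xi x) := by
  obtain ⟨a, b⟩ := p
  cases a <;> cases b <;> simp [isE0] at h
  case xa1.xi x x' => exact ⟨x, by rw [h]⟩

lemma main {n : ℕ} {T : Finset (Fin n × Fin n × Fin n)} :
    ∀ (NN : ℕ) (s : TState (RAg n) (RIt n)) (r : List (List (RAg n × RIt n))),
      exchanges r ≤ NN → Inv n T s → ValidExec s r →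
      ∃ r', ValidExec s r' ∧ exchanges r' = exchanges r ∧
        ∀ c ∈ r', c.countP isE0 ≠ 0 → c.countP isE0 = 1 := by
  intro NN
  induction NN with
  | zero =>
    intro s r hE hI hV
    cases r with
    | nil => exact ⟨[], trivial, rfl, by simp⟩
    | cons c rest =>
      exfalso
      have : 0 < c.length := List.length_pos_iff.2 hV.1.1
      simp only [exchanges, List.map_cons, List.sum_cons] at hE
      omega
  | succ NN ih =>
    intro s r hE hI hV
    cases r with
    | nil => exact ⟨[], trivial, rfl, by simp⟩
    | cons c rest =>
      obtain ⟨hc, hrest⟩ := hV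
      by_cases hcount : c.countP isE0 ≤ 1
      · have hlen : 0 < c.length := List.length_pos_iff.2 hc.1
        have hE' : exchanges rest ≤ NN := by simp [exchanges] at hE ⊢; omega
        obtain ⟨r'', hv'', he'', hp''⟩ := ih (stepCycle s c) rest hE' (inv_step hI hc) hrest
        refine ⟨c :: r'', ⟨hc, hv''⟩, ?_, ?_⟩
        · simp only [exchanges, List.map_cons, List.sum_cons] at he'' ⊢
          omega
        · intro d hd
          rcases List.mem_cons.1 hd with rfl | hd
          · intro h0; omega
          · exact hp'' d hd
      · push_neg at hcount
        obtain ⟨e, he, hpe⟩ := List.countP_pos_iff.1 (by omega : 0 < c.countP isE0)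
        obtain ⟨l1, l2, rfl⟩ := List.append_of_mem he
        have hrot : (l1 ++ e :: l2).rotate l1.length = e :: (l2 ++ l1) := by
          rw [List.rotate_eq_drop_append_take (by simp), List.drop_left, List.take_left]
          simp
        have vrot : ValidCycle s (e :: (l2 ++ l1)) := hrot ▸ validCycle_rotate hc l1.length
        have hstep : stepCycle s (e :: (l2 ++ l1)) = stepCycle s (l1 ++ e :: l2) := by
          rw [← hrot, stepCycle_rotate]
        have hcrot : (e :: (l2 ++ l1)).countP isE0 = (l1 ++ e :: l2).countP isE0 := by
          rw [← hrot]; exact (List.rotate_perm _ _).countP_eq _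
        have htail : (l2 ++ l1).countP isE0 ≠ 0 := by
          rw [List.countP_cons, if_pos hpe] at hcrot
          omega
        obtain ⟨w, q, v, hwqv, hq, hw0⟩ := exists_first _ _ htail
        obtain ⟨x, rfl⟩ := isE0_spec hpe
        obtain ⟨x', rfl⟩ := isE0_spec hq
        have hcc : ((RAg.xa1 x, RIt.xi x) :: (l2 ++ l1)) =
            ((RAg.xa1 x, RIt.xi x) :: w) ++ ((RAg.xa1 x', RIt.xi x') :: v) := by
          rw [hwqv]; simp
        rw [hcc] at vrot hstep hcrot
        obtain ⟨vc1, vc2, hrel⟩ := split hI vrot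
        have hrest0 : ValidExec (stepCycle s (((RAg.xa1 x, RIt.xi x) :: w) ++
            ((RAg.xa1 x', RIt.xi x') :: v))) rest := by rw [hstep]; exact hrest
        have hrest' : ValidExec (stepCycle (stepCycle s ((RAg.xa1 x, RIt.xi x) :: w))
            ((RAg.xa1 x', RIt.xi x') :: v)) rest := hrel.symm.validExec hrest0
        have hv2 : ValidExec (stepCycle s ((RAg.xa1 x, RIt.xi x) :: w))
            (((RAg.xa1 x', RIt.xi x') :: v) :: rest) := ⟨vc2, hrest'⟩
        have hlen : (l1 ++ (RAg.xa1 x, RIt.xi x) :: l2).length =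
            (((RAg.xa1 x, RIt.xi x) :: w) ++ ((RAg.xa1 x', RIt.xi x') :: v)).length := by
          rw [← hcc, ← hrot, List.length_rotate]
        have hL : l1.length + (l2.length + 1) = w.length + (v.length + 1) + 1 := by
          simpa using hlen
        have hE2 : exchanges ((((RAg.xa1 x', RIt.xi x') :: v)) :: rest) ≤ NN := by
          simp only [exchanges, List.map_cons, List.sum_cons, List.length_append,
            List.length_cons] at hE ⊢
          omega
        obtain ⟨r'', hv'', he'', hp''⟩ :=
          ih (stepCycle s ((RAg.xa1 x, RIt.xi x) :: w))
            ((((RAg.xa1 x', RIt.xi x') :: v)) :: rest) hE2 (inv_step hI vc1) hv2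
        refine ⟨((RAg.xa1 x, RIt.xi x) :: w) :: r'', ⟨vc1, hv''⟩, ?_, ?_⟩
        · simp only [exchanges, List.map_cons, List.sum_cons, List.length_append,
            List.length_cons] at he'' ⊢
          omega
        · intro d hd
          rcases List.mem_cons.1 hd with rfl | hd
          · intro _
            have : isE0 ((RAg.xa1 x, RIt.xi x) : RAg n × RIt n) = true := by simp [isE0]
            simp [List.countP_cons, this, hw0]
          · exact hp'' d hd

end S19

/-- Every execution on the reduction trading graph can be
transformed into one with the same total number of exchanges in which every cycle
containing an `E₀` edge contains exactly one `E₀` edge. -/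
theorem stmt19 (n : ℕ) (T : Finset (Fin n × Fin n × Fin n))
    (r : List (List (RAg n × RIt n))) (hr : ValidExec ⟨RS n T, RD n T⟩ r) :
    ∃ r' : List (List (RAg n × RIt n)),
      ValidExec ⟨RS n T, RD n T⟩ r' ∧ exchanges r' = exchanges r ∧
      ∀ c ∈ r', c.countP isE0 ≠ 0 → c.countP isE0 = 1 := by
  exact S19.main (exchanges r) _ r le_rfl (S19.inv_init n T) hr
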